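/- Let D > 0, d > 0, ρ > 0. Then (1/D)·∫_{−D/2}^{D/2} log₂(1 + ρ/(d² + y²)) dy = (2/D)·(g(d² + ρ) − g(d²)), where g(a) = (D/2)·log₂(D²/4 + a) − D·log₂(e) + 2·log₂(e)·√a·arctan(D/(2√a)). -/

import Mathlib

open Real

noncomputable def g (D a : ℝ) : ℝ :=
  (D/2) * Real.logb 2 (D^2/4 + a) - D * Real.logb 2 (Real.exp 1)
    + 2 * Real.logb 2 (Real.exp 1) * Real.sqrt a * Real.arctan (D / (2 * Real.sqrt a))

lemma antideriv (a : ℝ) (ha : 0 < a) (y : ℝ) :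
    HasDerivAt (fun y => y * Real.log (a + y^2) - 2*y
      + 2*Real.sqrt a * Real.arctan (y / Real.sqrt a)) (Real.log (a + y^2)) y := by
  have hpos : 0 < a + y^2 := by positivity
  have hs : (0:ℝ) < Real.sqrt a := Real.sqrt_pos.mpr ha
  have hsq : Real.sqrt a ^ 2 = a := Real.sq_sqrt ha.le
  have hinner : HasDerivAt (fun y : ℝ => a + y^2) (2*y) y := by
    simpa using (hasDerivAt_pow 2 y).const_add a
  have hlog : HasDerivAt (fun y : ℝ => Real.log (a + y^2)) ((a+y^2)⁻¹ * (2*y)) y :=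
    by have := (Real.hasDerivAt_log hpos.ne').comp y hinner; exact this
  have h1 : HasDerivAt (fun y : ℝ => y * Real.log (a + y^2))
      (1 * Real.log (a + y^2) + y * ((a+y^2)⁻¹ * (2*y))) y :=
    (hasDerivAt_id y).mul hlog
  have hq : HasDerivAt (fun y : ℝ => y / Real.sqrt a) (1 / Real.sqrt a) y := by
    simpa [div_eq_mul_inv] using (hasDerivAt_id y).mul_const (Real.sqrt a)⁻¹
  have harct : HasDerivAt (fun y : ℝ => Real.arctan (y / Real.sqrt a))
      ((1 + (y / Real.sqrt a)^2)⁻¹ * (1 / Real.sqrt a)) y := by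
    have := (Real.hasDerivAt_arctan (y / Real.sqrt a)).comp y hq
    simp only [one_div] at this ⊢; exact this
  have h : HasDerivAt (fun y => y * Real.log (a + y^2) - 2*y
      + 2*Real.sqrt a * Real.arctan (y / Real.sqrt a))
      (1 * Real.log (a + y^2) + y * ((a+y^2)⁻¹ * (2*y)) - 2 * 1
        + 2*Real.sqrt a * ((1 + (y / Real.sqrt a)^2)⁻¹ * (1 / Real.sqrt a))) y := by
    have := (h1.sub ((hasDerivAt_id y).const_mul 2)).add
      ((harct.const_mul (2*Real.sqrt a)))
    exact this
  convert h using 1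
  have h2 : 1 + (y / Real.sqrt a)^2 = (a + y^2)/a := by
    rw [div_pow, hsq]; field_simp
  rw [h2]
  have key : 2*Real.sqrt a * (((a+y^2)/a)⁻¹ * (1/Real.sqrt a)) = 2*a/(a+y^2) := by
    rw [inv_div]
    field_simp
  rw [key]
  field_simp
  ring

lemma integ (a D : ℝ) (ha : 0 < a) :
    ∫ y in (-(D/2))..(D/2), Real.log (a + y^2)
      = D * Real.log (a + D^2/4) - 2*D + 4*Real.sqrt a * Real.arctan (D/(2*Real.sqrt a)) := by
  have hs : (0:ℝ) < Real.sqrt a := Real.sqrt_pos.mpr ha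
  have hcont : ContinuousOn (fun y : ℝ => Real.log (a + y^2)) (Set.uIcc (-(D/2)) (D/2)) := by
    apply ContinuousOn.log
    · exact (continuous_const.add (continuous_pow 2)).continuousOn
    · intro x _; positivity
  rw [intervalIntegral.integral_eq_sub_of_hasDerivAt
    (fun y _ => antideriv a ha y) (hcont.intervalIntegrable)]
  have h1 : (D/2) / Real.sqrt a = D / (2 * Real.sqrt a) := by ring
  have h2 : (-(D/2)) / Real.sqrt a = -(D / (2 * Real.sqrt a)) := by ring
  rw [h1, h2, Real.arctan_neg]
  rw [show (-(D/2))^2 = D^2/4 by ring, show (D/2)^2 = D^2/4 by ring]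
  ring

theorem stmt_10 (D d ρ : ℝ) (hD : 0 < D) (hd : 0 < d) (hρ : 0 < ρ) :
    (1/D) * ∫ y in (-(D/2))..(D/2), Real.logb 2 (1 + ρ / (d^2 + y^2))
      = (2/D) * (g D (d^2 + ρ) - g D (d^2)) := by
  have hA : (0:ℝ) < d^2 + ρ := by positivity
  have hl2 : Real.log 2 ≠ 0 := (Real.log_pos (by norm_num)).ne'
  have hcongr : (∫ y in (-(D/2))..(D/2), Real.logb 2 (1 + ρ / (d^2 + y^2)))
      = ∫ y in (-(D/2))..(D/2),
        (Real.log ((d^2+ρ) + y^2) - Real.log (d^2 + y^2)) / Real.log 2 := by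
    apply intervalIntegral.integral_congr
    intro y _
    simp only
    have hy : (0:ℝ) < d^2 + y^2 := by positivity
    have : 1 + ρ / (d^2 + y^2) = ((d^2+ρ) + y^2)/(d^2 + y^2) := by field_simp; ring
    rw [this, Real.logb, Real.log_div (by positivity) hy.ne']
  have ic : ∀ a : ℝ, 0 < a → IntervalIntegrable (fun y => Real.log (a + y^2))
      MeasureTheory.volume (-(D/2)) (D/2) := by
    intro a ha
    apply ContinuousOn.intervalIntegrable
    apply ContinuousOn.log
    · exact (continuous_const.add (continuous_pow 2)).continuousOn
    · intro x _; positivity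
  rw [hcongr, intervalIntegral.integral_div,
    intervalIntegral.integral_sub (ic _ hA) (ic _ (by positivity)),
    integ _ _ hA, integ _ _ (show (0:ℝ) < d^2 by positivity)]
  simp only [g, Real.logb, Real.log_exp]
  field_simp
  ring
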